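/- Let n be a finite index type, let a be an arbitrary complex n×n matrix with entries a_{ik}, let d : n → ℝ, and let ρ = diagonal(d) be the real diagonal matrix with entries d_i (regarded as a complex matrix). Then tr(2ρaρa* - a*aρ² - aa*ρ²) = -∑_{i,k} |a_{ik}|²·(d_i - d_k)². (Key identity (3.2) in the proof of nonpositivity of the dissipation operator D, computed in an eigenbasis of ρ.) -/

import Mathlib

open Matrix

/-- Key identity (3.2): for `ρ = diagonal d` with real `d`,
`tr(2ρaρa* - a*aρ² - aa*ρ²) = -∑ᵢₖ |aᵢₖ|²(dᵢ - dₖ)²`. -/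
theorem trace_diag_form_eq_neg_sum
    {n : Type*} [Fintype n] [DecidableEq n]
    (a : Matrix n n ℂ) (d : n → ℝ) (ρ : Matrix n n ℂ)
    (hρ : ρ = Matrix.diagonal (fun i => (d i : ℂ))) :
    ((2 : ℂ) • (ρ * a * ρ * aᴴ) - aᴴ * a * ρ ^ 2 - a * aᴴ * ρ ^ 2).trace
      = -((∑ i, ∑ k, ‖a i k‖ ^ 2 * (d i - d k) ^ 2 : ℝ) : ℂ) := by
  subst hρ
  simp only [trace, diag_apply, mul_apply, pow_two, diagonal_apply, conjTranspose_apply,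
    Matrix.smul_apply, Pi.smul_apply, Matrix.sub_apply, Finset.sum_ite_eq, Finset.sum_ite_eq',
    Finset.mem_univ, if_true, mul_ite, ite_mul, mul_zero, zero_mul, Finset.sum_ite_irrel,
    Finset.sum_const_zero, smul_eq_mul]
  push_cast
  simp only [Finset.sum_mul, Finset.mul_sum]
  rw [Finset.sum_sub_distrib, Finset.sum_sub_distrib,
    Finset.sum_comm (f := fun (x y : n) => star (a y x) * a y x * ((d x : ℂ) * (d x))),
    ← Finset.sum_sub_distrib, ← Finset.sum_sub_distrib, ← Finset.sum_neg_distrib]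
  refine Finset.sum_congr rfl fun x _ => ?_
  rw [← Finset.sum_sub_distrib, ← Finset.sum_sub_distrib, ← Finset.sum_neg_distrib]
  refine Finset.sum_congr rfl fun y _ => ?_
  have h : (‖a x y‖ : ℂ) * (‖a x y‖) = a x y * star (a x y) := by
    rw [Complex.star_def, Complex.mul_conj]
    push_cast [← Complex.sq_norm]
    ring
  linear_combination (((d x:ℂ)-(d y))^2) * h
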